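/- One-sided tail bounds from a quartic exponential-moment estimate (core of the proof of Proposition 6.1): let M be a real random variable on a probability space and A, B > 0 be such that E[exp(μM)] ≤ exp(A·μ⁴ + B·μ²) for every μ > 0. Then (i) for every u with 0 < u ≤ 4·B^{3/2}/√A one has ℙ(M > u) ≤ exp(−u²/(8B)), and (ii) for every u > 8·B^{3/2}/√A one has ℙ(M > u) ≤ exp(−(3/8)·(u⁴/A)^{1/3}). -/

import Mathlib

open MeasureTheory Real

lemma chernoff_quartic {Ω : Type*} [MeasurableSpace Ω] (μ : Measure Ω)
    [IsProbabilityMeasure μ] (M : Ω → ℝ) (hM : Measurable M) (A B : ℝ)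
    (hmgf : ∀ t : ℝ, 0 < t →
      ∫⁻ ω, ENNReal.ofReal (Real.exp (t * M ω)) ∂μ ≤
        ENNReal.ofReal (Real.exp (A * t ^ 4 + B * t ^ 2)))
    (t u : ℝ) (ht : 0 < t) :
    μ {ω | u < M ω} ≤ ENNReal.ofReal (Real.exp (A * t ^ 4 + B * t ^ 2 - t * u)) := by
  have hmeas : Measurable fun ω => ENNReal.ofReal (Real.exp (t * M ω - t * u)) := by
    measurability
  have hmeas2 : Measurable fun ω => ENNReal.ofReal (Real.exp (t * M ω)) := by
    measurability
  have h1 : μ {ω | u < M ω} ≤ ∫⁻ ω, ENNReal.ofReal (Real.exp (t * M ω - t * u)) ∂μ := by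
    have h2 := mul_meas_ge_le_lintegral₀ (μ := μ) hmeas.aemeasurable 1
    rw [one_mul] at h2
    refine le_trans (measure_mono ?_) h2
    intro ω hω
    simp only [Set.mem_setOf_eq] at hω ⊢
    refine ENNReal.one_le_ofReal.2 ?_
    rw [Real.one_le_exp_iff]
    nlinarith
  refine h1.trans ?_
  have heq : ∀ ω, ENNReal.ofReal (Real.exp (t * M ω - t * u)) =
      ENNReal.ofReal (Real.exp (t * M ω)) * ENNReal.ofReal (Real.exp (-(t * u))) := by
    intro ω
    rw [← ENNReal.ofReal_mul (Real.exp_nonneg _), ← Real.exp_add]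
    ring_nf
  simp_rw [heq]
  rw [lintegral_mul_const'' _ hmeas2.aemeasurable]
  calc (∫⁻ ω, ENNReal.ofReal (Real.exp (t * M ω)) ∂μ) * ENNReal.ofReal (Real.exp (-(t * u)))
      ≤ ENNReal.ofReal (Real.exp (A * t ^ 4 + B * t ^ 2)) * ENNReal.ofReal (Real.exp (-(t * u))) := by
        exact mul_le_mul_of_nonneg_right (hmgf t ht) (zero_le')
    _ = ENNReal.ofReal (Real.exp (A * t ^ 4 + B * t ^ 2 - t * u)) := by
        rw [← ENNReal.ofReal_mul (Real.exp_nonneg _), ← Real.exp_add]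
        ring_nf

/-- One-sided tail bounds from a quartic exponential-moment estimate
(core of the proof of Proposition 6.1). -/
theorem tail_bounds_from_quartic_mgf
    {Ω : Type*} [MeasurableSpace Ω] (μ : Measure Ω) [IsProbabilityMeasure μ]
    (M : Ω → ℝ) (hM : Measurable M) (A B : ℝ) (hA : 0 < A) (hB : 0 < B)
    (hmgf : ∀ t : ℝ, 0 < t →
      ∫⁻ ω, ENNReal.ofReal (Real.exp (t * M ω)) ∂μ ≤
        ENNReal.ofReal (Real.exp (A * t ^ 4 + B * t ^ 2))) :
    (∀ u : ℝ, 0 < u → u ≤ 4 * B ^ ((3 : ℝ) / 2) / Real.sqrt A →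
      μ {ω | u < M ω} ≤ ENNReal.ofReal (Real.exp (-u ^ 2 / (8 * B)))) ∧
    (∀ u : ℝ, 8 * B ^ ((3 : ℝ) / 2) / Real.sqrt A < u →
      μ {ω | u < M ω} ≤
        ENNReal.ofReal (Real.exp (-(3 / 8) * (u ^ 4 / A) ^ ((1 : ℝ) / 3)))) := by
  have hB32 : B ^ ((3 : ℝ) / 2) * B ^ ((3 : ℝ) / 2) = B ^ 3 := by
    rw [← Real.rpow_add hB]
    norm_num
  have hsA : 0 < Real.sqrt A := Real.sqrt_pos.2 hA
  constructor
  · intro u hu hu'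
    have hAu : A * u ^ 2 ≤ 16 * B ^ 3 := by
      have h1 : u * Real.sqrt A ≤ 4 * B ^ ((3 : ℝ) / 2) := by
        rw [div_eq_mul_inv] at hu'
        calc u * Real.sqrt A ≤ (4 * B ^ ((3 : ℝ) / 2) * (Real.sqrt A)⁻¹) * Real.sqrt A :=
              mul_le_mul_of_nonneg_right hu' hsA.le
          _ = 4 * B ^ ((3 : ℝ) / 2) := by field_simp
      have h2 : (u * Real.sqrt A) * (u * Real.sqrt A) ≤
          (4 * B ^ ((3 : ℝ) / 2)) * (4 * B ^ ((3 : ℝ) / 2)) := by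
        have : 0 ≤ u * Real.sqrt A := by positivity
        nlinarith
      have h3 : Real.sqrt A * Real.sqrt A = A := Real.mul_self_sqrt hA.le
      nlinarith [hB32]
    set t := u / (4 * B) with ht_def
    have ht : 0 < t := by positivity
    refine (chernoff_quartic μ M hM A B hmgf t u ht).trans ?_
    refine ENNReal.ofReal_le_ofReal (Real.exp_le_exp.2 ?_)
    rw [ht_def]
    -- A*(u/(4B))^4 + B*(u/(4B))^2 - (u/(4B))*u ≤ -u^2/(8B)
    have key : A * (u / (4 * B)) ^ 4 + B * (u / (4 * B)) ^ 2 - (u / (4 * B)) * u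
        ≤ -u ^ 2 / (8 * B) := by
      have e1 : A * (u / (4 * B)) ^ 4 = A * u ^ 4 / (256 * B ^ 4) := by
        field_simp; ring
      have e2 : B * (u / (4 * B)) ^ 2 = u ^ 2 / (16 * B) := by
        field_simp; ring
      have e3 : (u / (4 * B)) * u = u ^ 2 / (4 * B) := by
        field_simp
      rw [e1, e2, e3]
      rw [div_add_div _ _ (by positivity) (by positivity)]
      have hu2 : 0 ≤ u ^ 2 := sq_nonneg u
      rw [div_sub_div _ _ (by positivity : (256 : ℝ) * B ^ 4 * (16 * B) ≠ 0) (by positivity : (4 : ℝ) * B ≠ 0),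
        div_le_div_iff₀ (by positivity) (by positivity)]
      nlinarith [sq_nonneg u, sq_nonneg (u^2), pow_pos hB 3, pow_pos hB 4, pow_pos hB 5, mul_le_mul_of_nonneg_right hAu hu2]
    exact key
  · intro u hu'
    have hu : 0 < u := lt_trans (by positivity) hu'
    set t := (u / (8 * A)) ^ ((1 : ℝ) / 3) with ht_def
    have ht : 0 < t := Real.rpow_pos_of_pos (by positivity) _
    have ht3 : t ^ 3 = u / (8 * A) := by
      rw [ht_def, ← Real.rpow_natCast (_ ^ _) 3, ← Real.rpow_mul (by positivity)]
      norm_num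
    have hut : u = 8 * A * t ^ 3 := by
      field_simp at ht3
      linarith
    -- (u^4/A)^(1/3) = 16 * A * t^4
    have hc : (u ^ 4 / A) ^ ((1 : ℝ) / 3) = 16 * A * t ^ 4 := by
      have e : u ^ 4 / A = (16 * A * t ^ 4) ^ (3 : ℕ) := by
        rw [hut]; field_simp; ring
      rw [e, ← Real.rpow_natCast (16 * A * t ^ 4) 3, ← Real.rpow_mul (by positivity)]
      norm_num
    -- from the hypothesis, sqrt B < sqrt A * t, hence B < A * t^2
    have hsB : Real.sqrt B ^ 3 = B ^ ((3 : ℝ) / 2) := by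
      rw [Real.sqrt_eq_rpow, ← Real.rpow_natCast (B ^ ((1 : ℝ) / 2)) 3,
        ← Real.rpow_mul hB.le]
      norm_num
    have h3A : Real.sqrt A * Real.sqrt A = A := Real.mul_self_sqrt hA.le
    have h1 : B ^ ((3 : ℝ) / 2) < (Real.sqrt A * t) ^ 3 := by
      rw [div_lt_iff₀ hsA, hut] at hu'
      have e : (Real.sqrt A * t) ^ 3 = A * Real.sqrt A * t ^ 3 := by
        calc (Real.sqrt A * t) ^ 3 = (Real.sqrt A * Real.sqrt A) * Real.sqrt A * t ^ 3 := by ring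
          _ = A * Real.sqrt A * t ^ 3 := by rw [h3A]
      rw [e]
      nlinarith
    have h2 : Real.sqrt B < Real.sqrt A * t := by
      by_contra hcon
      push_neg at hcon
      have hsb : 0 ≤ Real.sqrt B := Real.sqrt_nonneg B
      have : (Real.sqrt A * t) ^ 3 ≤ Real.sqrt B ^ 3 := pow_le_pow_left₀ (by positivity) hcon 3
      rw [hsB] at this
      linarith
    have hBAt : B < A * t ^ 2 := by
      have h3B : Real.sqrt B * Real.sqrt B = B := Real.mul_self_sqrt hB.le
      nlinarith [Real.sqrt_nonneg B, hsA, ht]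
    refine (chernoff_quartic μ M hM A B hmgf t u ht).trans ?_
    refine ENNReal.ofReal_le_ofReal (Real.exp_le_exp.2 ?_)
    rw [hc, hut]
    nlinarith [ht, sq_nonneg t, pow_pos ht 2, pow_pos ht 4]
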